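/- Let γ be the standard Gaussian measure on ℝ with CDF Φ, Φ⁻¹ : (0,1) → ℝ its inverse, d ≥ 1, μ the d-fold product of standard Gaussian measures on ℝ^d, and λ Lebesgue measure on (0,1). Let f : ℝ × ℝ^d → ℝ and Γ : ℝ^d → ℝ be measurable, and define g(z,y) = max(f(z,y),0)·1{z < Γ(y)} and ĝ(u,y) = Φ(Γ(y))·max( f( Φ⁻¹( u·Φ(Γ(y)) ), y ), 0 ). Assume g is square-integrable with respect to γ ⊗ μ. If moreover (γ⊗μ)({(z,y) : z ≥ Γ(y)}) > 0 (positive knock-out probability) and ∫ g d(γ⊗μ) > 0 (positive expected payoff), then Var_{λ⊗μ}[ĝ] < Var_{γ⊗μ}[g], i.e., the variance reduction is strict. -/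

import Mathlib

open MeasureTheory ProbabilityTheory Set



lemma csvr_gauss_pos {s : Set ℝ} (h : 0 < volume s) :
    0 < gaussianReal 0 1 s := by
  rw [gaussianReal_apply 0 one_ne_zero]
  by_contra hc
  push_neg at hc
  have h0 : ∫⁻ x in s, gaussianPDF 0 1 x = 0 := le_antisymm hc zero_le
  rw [lintegral_eq_zero_iff (measurable_gaussianPDF 0 1)] at h0
  have h1 : ∀ᵐ x ∂(volume.restrict s), False :=
    h0.mono fun x hx => (gaussianPDF_pos 0 one_ne_zero x).ne' hx
  rw [ae_iff] at h1
  simp only [not_false_eq_true, setOf_true, Measure.restrict_apply_univ] at h1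
  exact h.ne' h1

lemma csvr_gauss_Ioo_pos {a b : ℝ} (h : a < b) : 0 < gaussianReal 0 1 (Ioo a b) :=
  csvr_gauss_pos (by rw [Real.volume_Ioo]; exact ENNReal.ofReal_pos.2 (by linarith))

section Phi

variable {Φ : ℝ → ℝ} (hΦ : ∀ x : ℝ, Φ x = ((gaussianReal 0 1) (Set.Iic x)).toReal)

include hΦ

lemma csvr_gauss_Iic (x : ℝ) : gaussianReal 0 1 (Iic x) = ENNReal.ofReal (Φ x) := by
  rw [hΦ x, ENNReal.ofReal_toReal (measure_ne_top _ _)]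

lemma csvr_Phi_pos (x : ℝ) : 0 < Φ x := by
  rw [hΦ x]
  refine ENNReal.toReal_pos (fun h0 => ?_) (measure_ne_top _ _)
  exact absurd (measure_mono_null (fun t ht => mem_Iic.2 ht.2.le) h0)
    (csvr_gauss_Ioo_pos (show x - 1 < x by linarith)).ne'

lemma csvr_Phi_lt_one (x : ℝ) : Φ x < 1 := by
  rw [hΦ x]
  have h2 : gaussianReal 0 1 (Iic x) < 1 := by
    have hlt : gaussianReal 0 1 (Iic x) < gaussianReal 0 1 (Iic x) + gaussianReal 0 1 (Ioi x) :=
      ENNReal.lt_add_right (measure_ne_top _ _)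
        (fun h0 => (csvr_gauss_Ioo_pos (show x < x + 1 by linarith)).ne'
          (measure_mono_null Ioo_subset_Ioi_self h0))
    calc gaussianReal 0 1 (Iic x) < _ := hlt
    _ = gaussianReal 0 1 (Iic x ∪ Ioi x) :=
      (measure_union (Iic_disjoint_Ioi le_rfl) measurableSet_Ioi).symm
    _ = 1 := by rw [Iic_union_Ioi, measure_univ]
  have := ENNReal.toReal_lt_toReal (measure_ne_top _ _) ENNReal.one_ne_top |>.2 h2
  simpa using this

lemma csvr_Phi_strictMono : StrictMono Φ := by
  intro x y hxy
  rw [hΦ x, hΦ y]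
  refine ENNReal.toReal_lt_toReal (measure_ne_top _ _) (measure_ne_top _ _) |>.2 ?_
  calc gaussianReal 0 1 (Iic x)
      < gaussianReal 0 1 (Iic x) + gaussianReal 0 1 (Ioc x y) :=
        ENNReal.lt_add_right (measure_ne_top _ _)
          (lt_of_lt_of_le (csvr_gauss_Ioo_pos hxy) (measure_mono Ioo_subset_Ioc_self)).ne'
    _ = gaussianReal 0 1 (Iic x ∪ Ioc x y) :=
        (measure_union (Iic_disjoint_Ioc le_rfl) measurableSet_Ioc).symm
    _ = gaussianReal 0 1 (Iic y) := by rw [Iic_union_Ioc_eq_Iic hxy.le]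

lemma csvr_Phi_measurable : Measurable Φ := (csvr_Phi_strictMono hΦ).monotone.measurable

end Phi


section B
variable {Φ Φinv : ℝ → ℝ}
  (hΦ : ∀ x : ℝ, Φ x = ((gaussianReal 0 1) (Set.Iic x)).toReal)
  (hΦinv : ∀ p ∈ Set.Ioo (0 : ℝ) 1, Φ (Φinv p) = p)


include hΦ hΦinv

lemma csvr_Phinv_Phi (x : ℝ) : Φinv (Φ x) = x :=
  (csvr_Phi_strictMono hΦ).injective
    (hΦinv _ ⟨csvr_Phi_pos hΦ x, csvr_Phi_lt_one hΦ x⟩)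

lemma csvr_Phinv_aemeasurable :
    AEMeasurable Φinv (volume.restrict (Ioo (0:ℝ) 1)) := by
  refine aemeasurable_restrict_of_monotoneOn measurableSet_Ioo ?_
  intro p hp q hq hpq
  exact ((csvr_Phi_strictMono hΦ).le_iff_le).1 (by rw [hΦinv p hp, hΦinv q hq]; exact hpq)

lemma csvr_map_Phi : (gaussianReal 0 1).map Φ = volume.restrict (Ioo (0:ℝ) 1) := by
  have hΦm := csvr_Phi_measurable hΦ
  haveI : IsProbabilityMeasure ((gaussianReal 0 1).map Φ) :=
    Measure.isProbabilityMeasure_map hΦm.aemeasurable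
  refine Measure.ext_of_Iic _ _ fun a => ?_
  rw [Measure.map_apply hΦm measurableSet_Iic, Measure.restrict_apply measurableSet_Iic]
  rcases le_or_gt a 0 with ha | ha
  · have h1 : Φ ⁻¹' Iic a = ∅ :=
      eq_empty_of_forall_notMem fun x hx =>
        absurd (le_trans (mem_Iic.1 hx) ha) (not_le.2 (csvr_Phi_pos hΦ x))
    have h2 : Iic a ∩ Ioo 0 1 = ∅ :=
      eq_empty_of_forall_notMem fun x hx =>
        absurd (le_trans (mem_Iic.1 hx.1) ha) (not_le.2 hx.2.1)
    simp [h1, h2]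
  rcases lt_or_ge a 1 with ha1 | ha1
  · have hmem : a ∈ Ioo (0:ℝ) 1 := ⟨ha, ha1⟩
    have h1 : Φ ⁻¹' Iic a = Iic (Φinv a) := by
      ext x
      simp only [mem_preimage, mem_Iic]
      constructor
      · intro h
        exact ((csvr_Phi_strictMono hΦ).le_iff_le).1 (by rw [hΦinv a hmem]; exact h)
      · intro h
        rw [← hΦinv a hmem]
        exact ((csvr_Phi_strictMono hΦ).le_iff_le).2 h
    have h2 : Iic a ∩ Ioo 0 1 = Ioc 0 a := by
      ext x
      simp only [mem_inter_iff, mem_Iic, mem_Ioo, mem_Ioc]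
      exact ⟨fun h => ⟨h.2.1, h.1⟩, fun h => ⟨h.2, h.1, lt_of_le_of_lt h.2 ha1⟩⟩
    rw [h1, h2, csvr_gauss_Iic hΦ, hΦinv a hmem, Real.volume_Ioc]
    simp
  · have h1 : Φ ⁻¹' Iic a = univ :=
      eq_univ_of_forall fun x => mem_Iic.2 (le_trans (csvr_Phi_lt_one hΦ x).le ha1)
    have h2 : Iic a ∩ Ioo 0 1 = Ioo 0 1 :=
      inter_eq_right.2 fun x hx => mem_Iic.2 (le_trans hx.2.le ha1)
    rw [h1, h2]
    simp

end B

lemma csvr_scale {c : ℝ} (hc0 : 0 < c) :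
    (volume.restrict (Ioo (0:ℝ) 1)).map (fun u => c * u)
      = ENNReal.ofReal c⁻¹ • volume.restrict (Ioo (0:ℝ) c) := by
  have hmeas : Measurable fun u : ℝ => c * u := measurable_id.const_mul c
  refine Measure.ext fun s hs => ?_
  rw [Measure.map_apply hmeas hs, Measure.restrict_apply (hmeas hs), Measure.smul_apply,
    Measure.restrict_apply hs, smul_eq_mul]
  have hpre : (fun u : ℝ => c * u) ⁻¹' Ioo 0 c = Ioo 0 1 := by
    ext x
    simp only [mem_preimage, mem_Ioo]
    constructor
    · rintro ⟨h1, h2⟩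
      constructor <;> nlinarith
    · rintro ⟨h1, h2⟩
      constructor <;> nlinarith
  calc volume ((fun u : ℝ => c * u) ⁻¹' s ∩ Ioo 0 1)
      = volume ((fun u : ℝ => c * u) ⁻¹' (s ∩ Ioo 0 c)) := by rw [preimage_inter, hpre]
    _ = ENNReal.ofReal |c⁻¹| * volume (s ∩ Ioo 0 c) := Real.volume_preimage_mul_left hc0.ne' _
    _ = ENNReal.ofReal c⁻¹ * volume (s ∩ Ioo 0 c) := by rw [abs_of_pos (inv_pos.2 hc0)]


section C
variable {Φ Φinv : ℝ → ℝ}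


variable (hΦ : ∀ x : ℝ, Φ x = ((gaussianReal 0 1) (Set.Iic x)).toReal)
  (hΦinv : ∀ p ∈ Set.Ioo (0 : ℝ) 1, Φ (Φinv p) = p)

include hΦ hΦinv

-- auxiliary measurability facts
lemma csvr_F_aemeas {m : ℝ → ℝ} (hm : Measurable m) {c : ℝ} (hc0 : 0 < c) (hc1 : c < 1) :
    AEMeasurable (fun t => m (Φinv t)) (volume.restrict (Ioo (0:ℝ) c)) :=
  hm.comp_aemeasurable ((csvr_Phinv_aemeasurable hΦ hΦinv).mono_measure
    (Measure.restrict_mono (Ioo_subset_Ioo_right hc1.le) le_rfl))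

lemma csvr_k_aesm {m : ℝ → ℝ} (hm : Measurable m) {c : ℝ} (hc0 : 0 < c) (hc1 : c < 1) :
    AEStronglyMeasurable (fun t => if t < c then m (Φinv t) else 0)
      ((gaussianReal 0 1).map Φ) := by
  rw [csvr_map_Phi hΦ hΦinv]
  have h1 : AEMeasurable (fun t => m (Φinv t)) (volume.restrict (Ioo (0:ℝ) 1)) :=
    hm.comp_aemeasurable (csvr_Phinv_aemeasurable hΦ hΦinv)
  have h2 : AEMeasurable ((Iio c).indicator fun t => m (Φinv t))
      (volume.restrict (Ioo (0:ℝ) 1)) := h1.indicator measurableSet_Iio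
  refine (h2.congr ?_).aestronglyMeasurable
  exact Filter.Eventually.of_forall fun t => by simp [indicator_apply]

lemma csvr_key {m : ℝ → ℝ} (hm : Measurable m) (b : ℝ) :
    ∫ u in Ioo (0:ℝ) 1, Φ b * m (Φinv (u * Φ b))
      = ∫ z, (if z < b then m z else 0) ∂(gaussianReal 0 1) := by
  set c := Φ b with hcdef
  have hc0 : 0 < c := csvr_Phi_pos hΦ b
  have hc1 : c < 1 := csvr_Phi_lt_one hΦ b
  set F : ℝ → ℝ := fun t => m (Φinv t) with hFdef
  have hmulmeas : Measurable fun u : ℝ => c * u := measurable_id.const_mul c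
  have hFasm : AEStronglyMeasurable F
      ((volume.restrict (Ioo (0:ℝ) 1)).map (fun u => c * u)) := by
    rw [csvr_scale hc0]
    exact ((csvr_F_aemeas hΦ hΦinv hm hc0 hc1).smul_measure _).aestronglyMeasurable
  have e1 : ∫ u in Ioo (0:ℝ) 1, c * m (Φinv (u * c)) ∂volume
      = c * ∫ u in Ioo (0:ℝ) 1, F (c * u) ∂volume := by
    rw [← integral_const_mul]
    exact integral_congr_ae (Filter.Eventually.of_forall fun u => by dsimp only; rw [mul_comm u c])
  have e2 : ∫ u in Ioo (0:ℝ) 1, F (c * u) ∂volume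
      = ∫ t, F t ∂((volume.restrict (Ioo (0:ℝ) 1)).map (fun u => c * u)) :=
    (integral_map hmulmeas.aemeasurable hFasm).symm
  have e3 : ∫ t, F t ∂((volume.restrict (Ioo (0:ℝ) 1)).map (fun u => c * u))
      = c⁻¹ * ∫ t in Ioo (0:ℝ) c, F t ∂volume := by
    rw [csvr_scale hc0, integral_smul_measure, ENNReal.toReal_ofReal (inv_pos.2 hc0).le,
      smul_eq_mul]
  have e4 : ∫ t in Ioo (0:ℝ) c, F t ∂volume
      = ∫ t in Ioo (0:ℝ) 1, (if t < c then F t else 0) ∂volume := by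
    have h1 : (fun t => if t < c then F t else 0) = (Iio c).indicator F := by
      funext t; rw [indicator_apply]; simp
    have hset : Ioo (0:ℝ) 1 ∩ Iio c = Ioo 0 c := by
      ext t
      simp only [mem_inter_iff, mem_Ioo, mem_Iio]
      exact ⟨fun h => ⟨h.1.1, h.2⟩, fun h => ⟨⟨h.1, h.2.trans hc1⟩, h.2⟩⟩
    rw [h1, setIntegral_indicator measurableSet_Iio, hset]
  have e5 : ∫ t in Ioo (0:ℝ) 1, (if t < c then F t else 0) ∂volume
      = ∫ z, (if Φ z < c then F (Φ z) else 0) ∂(gaussianReal 0 1) := by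
    rw [← csvr_map_Phi hΦ hΦinv]
    exact integral_map (csvr_Phi_measurable hΦ).aemeasurable (csvr_k_aesm hΦ hΦinv hm hc0 hc1)
  have e6 : ∀ z, (if Φ z < c then F (Φ z) else 0) = (if z < b then m z else 0) := by
    intro z
    have : Φ z < c ↔ z < b := (csvr_Phi_strictMono hΦ).lt_iff_lt
    rw [if_congr this rfl rfl, hFdef]
    simp only [csvr_Phinv_Phi hΦ hΦinv z]
  calc ∫ u in Ioo (0:ℝ) 1, c * m (Φinv (u * c)) ∂volume
      = c * ∫ u in Ioo (0:ℝ) 1, F (c * u) ∂volume := e1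
    _ = c * (c⁻¹ * ∫ t in Ioo (0:ℝ) c, F t ∂volume) := by rw [e2, e3]
    _ = ∫ t in Ioo (0:ℝ) c, F t ∂volume := by field_simp
    _ = _ := by rw [e4, e5, integral_congr_ae (Filter.Eventually.of_forall e6)]

lemma csvr_keyint {m : ℝ → ℝ} (hm : Measurable m) (b : ℝ)
    (hI : Integrable (fun z => if z < b then m z else 0) (gaussianReal 0 1)) :
    Integrable (fun u => Φ b * m (Φinv (u * Φ b))) (volume.restrict (Ioo (0:ℝ) 1)) := by
  set c := Φ b with hcdef
  have hc0 : 0 < c := csvr_Phi_pos hΦ b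
  have hc1 : c < 1 := csvr_Phi_lt_one hΦ b
  set F : ℝ → ℝ := fun t => m (Φinv t) with hFdef
  have hmulmeas : Measurable fun u : ℝ => c * u := measurable_id.const_mul c
  have h1 : Integrable (fun t => if t < c then F t else 0) ((gaussianReal 0 1).map Φ) := by
    refine (integrable_map_measure (csvr_k_aesm hΦ hΦinv hm hc0 hc1)
      (csvr_Phi_measurable hΦ).aemeasurable).2 ?_
    refine hI.congr (Filter.Eventually.of_forall fun z => ?_)
    simp only [Function.comp]
    have : Φ z < c ↔ z < b := (csvr_Phi_strictMono hΦ).lt_iff_lt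
    rw [if_congr this rfl rfl, csvr_Phinv_Phi hΦ hΦinv z]
  rw [csvr_map_Phi hΦ hΦinv] at h1
  have h2 : Integrable F ((volume.restrict (Ioo (0:ℝ) 1)).restrict (Iio c)) := by
    have : (fun t => if t < c then F t else 0) = (Iio c).indicator F := by
      funext t; rw [indicator_apply]; simp
    rw [this, integrable_indicator_iff measurableSet_Iio] at h1
    exact h1
  rw [Measure.restrict_restrict measurableSet_Iio] at h2
  have hset : Iio c ∩ Ioo (0:ℝ) 1 = Ioo (0:ℝ) c := by
    ext t
    simp only [mem_inter_iff, mem_Ioo, mem_Iio]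
    exact ⟨fun h => ⟨h.2.1, h.1⟩, fun h => ⟨h.2, h.1, h.2.trans hc1⟩⟩
  rw [hset] at h2
  have h4 : Integrable F (ENNReal.ofReal c⁻¹ • volume.restrict (Ioo (0:ℝ) c)) :=
    h2.smul_measure ENNReal.ofReal_ne_top
  rw [← csvr_scale hc0] at h4
  have hFasm : AEStronglyMeasurable F
      ((volume.restrict (Ioo (0:ℝ) 1)).map (fun u => c * u)) := by
    rw [csvr_scale hc0]
    exact ((csvr_F_aemeas hΦ hΦinv hm hc0 hc1).smul_measure _).aestronglyMeasurable
  have h5 : Integrable (F ∘ fun u => c * u) (volume.restrict (Ioo (0:ℝ) 1)) :=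
    (integrable_map_measure hFasm hmulmeas.aemeasurable).1 h4
  have h6 := (h5.const_mul c)
  refine h6.congr (Filter.Eventually.of_forall fun u => ?_)
  simp only [Function.comp, hFdef]
  rw [mul_comm c u]

end C

/-- Strict variance reduction of the conditional sampling estimator: under
square-integrability of the up-&-out payoff `g`, if in addition there is a positive
probability of knock-out (`(γ ⊗ μ){(z,y) : z ≥ Γ(y)} > 0`) and the expected payoff is
positive, then the variance of the conditionally sampled payoff `ĝ` is strictly smaller
than that of `g`. -/
theorem conditional_sampling_strict_variance_reduction
    (d : ℕ) (hd : 1 ≤ d)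
    (Φ : ℝ → ℝ)
    (hΦ : ∀ x : ℝ, Φ x = ((gaussianReal 0 1) (Set.Iic x)).toReal)
    (Φinv : ℝ → ℝ)
    (hΦinv : ∀ p ∈ Set.Ioo (0 : ℝ) 1, Φ (Φinv p) = p)
    (f : ℝ × (Fin d → ℝ) → ℝ) (hf : Measurable f)
    (Γ : (Fin d → ℝ) → ℝ) (hΓ : Measurable Γ)
    (μ : Measure (Fin d → ℝ))
    (hμ : μ = Measure.pi fun _ : Fin d => gaussianReal 0 1)
    (g ghat : ℝ × (Fin d → ℝ) → ℝ)
    (hg : ∀ p : ℝ × (Fin d → ℝ), g p = if p.1 < Γ p.2 then max (f p) 0 else 0)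
    (hghat : ∀ p : ℝ × (Fin d → ℝ),
      ghat p = Φ (Γ p.2) * max (f (Φinv (p.1 * Φ (Γ p.2)), p.2)) 0)
    (hint2 : Integrable (fun p => (g p) ^ 2) ((gaussianReal 0 1).prod μ))
    (hknock : 0 < ((gaussianReal 0 1).prod μ) {p : ℝ × (Fin d → ℝ) | Γ p.2 ≤ p.1})
    (hpos : 0 < ∫ p, g p ∂((gaussianReal 0 1).prod μ)) :
    (∫ p, (ghat p) ^ 2 ∂((volume.restrict (Set.Ioo (0 : ℝ) 1)).prod μ))
        - (∫ p, ghat p ∂((volume.restrict (Set.Ioo (0 : ℝ) 1)).prod μ)) ^ 2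
      < (∫ p, (g p) ^ 2 ∂((gaussianReal 0 1).prod μ))
          - (∫ p, g p ∂((gaussianReal 0 1).prod μ)) ^ 2 := by
  clear hd hknock
  haveI hμprob : IsProbabilityMeasure μ := by rw [hμ]; infer_instance
  clear hμ
  set ν : Measure ℝ := volume.restrict (Set.Ioo (0 : ℝ) 1) with hνdef
  haveI hνprob : IsProbabilityMeasure ν :=
    ⟨by rw [hνdef, Measure.restrict_apply_univ]; simp [Real.volume_Ioo]⟩
  have hΦ0 : ∀ x, 0 < Φ x := csvr_Phi_pos hΦ
  have hΦ1 : ∀ x, Φ x < 1 := csvr_Phi_lt_one hΦ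
  have hΦm : Measurable Φ := csvr_Phi_measurable hΦ
  -- basic facts about g
  have hgmeas : Measurable g := by
    have : g = fun p => if p.1 < Γ p.2 then max (f p) 0 else 0 := funext hg
    rw [this]
    exact Measurable.ite (measurableSet_lt measurable_fst (hΓ.comp measurable_snd))
      (hf.max measurable_const) measurable_const
  have hgnonneg : ∀ p, 0 ≤ g p := fun p => by
    rw [hg p]; split_ifs
    · exact le_max_right _ _
    · exact le_rfl
  have hgint : Integrable g ((gaussianReal 0 1).prod μ) := by
    refine Integrable.mono' (hint2.add (integrable_const 1)) hgmeas.aestronglyMeasurable ?_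
    refine Filter.Eventually.of_forall fun p => ?_
    rw [Real.norm_eq_abs, abs_of_nonneg (hgnonneg p)]
    simp only [Pi.add_apply]
    nlinarith [sq_nonneg (g p - 1), hgnonneg p]
  -- slice integrability
  have hslice2 : ∀ᵐ y ∂μ, Integrable (fun z => g (z, y) ^ 2) (gaussianReal 0 1) :=
    hint2.prod_left_ae
  have hslice1 : ∀ᵐ y ∂μ, Integrable (fun z => g (z, y)) (gaussianReal 0 1) :=
    hgint.prod_left_ae
  -- conditional first and second moments
  set I1 : (Fin d → ℝ) → ℝ := fun y => ∫ z, g (z, y) ∂(gaussianReal 0 1) with hI1def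
  set I2 : (Fin d → ℝ) → ℝ := fun y => ∫ z, g (z, y) ^ 2 ∂(gaussianReal 0 1) with hI2def
  have hm1 : ∀ y, Measurable fun z : ℝ => max (f (z, y)) 0 := fun y =>
    (hf.comp (measurable_id.prodMk measurable_const)).max measurable_const
  have hm2 : ∀ y, Measurable fun z : ℝ => (max (f (z, y)) 0) ^ 2 := fun y =>
    (hm1 y).pow_const 2
  -- the per-slice change of variables identities
  have hkey1 : ∀ y, ∫ u in Set.Ioo (0:ℝ) 1, ghat (u, y) ∂volume = I1 y := by
    intro y
    rw [integral_congr_ae (Filter.Eventually.of_forall fun u => hghat (u, y)),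
      csvr_key hΦ hΦinv (hm1 y) (Γ y)]
    exact integral_congr_ae (Filter.Eventually.of_forall fun z => (hg (z, y)).symm)
  have hkey2 : ∀ y, ∫ u in Set.Ioo (0:ℝ) 1, ghat (u, y) ^ 2 ∂volume = Φ (Γ y) * I2 y := by
    intro y
    have h1 : ∀ u : ℝ, ghat (u, y) ^ 2
        = Φ (Γ y) * (Φ (Γ y) * (max (f (Φinv (u * Φ (Γ y)), y)) 0) ^ 2) := fun u => by
      rw [hghat (u, y)]; ring
    rw [integral_congr_ae (Filter.Eventually.of_forall h1), integral_const_mul,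
      csvr_key hΦ hΦinv (hm2 y) (Γ y)]
    congr 1
    refine integral_congr_ae (Filter.Eventually.of_forall fun z => ?_)
    dsimp only
    rw [hg (z, y)]
    split_ifs <;> ring
  -- per-slice integrability of ghat and ghat²
  have hsliceghat : ∀ᵐ y ∂μ, Integrable (fun u => ghat (u, y)) ν := by
    filter_upwards [hslice1] with y hy
    have h1 := csvr_keyint hΦ hΦinv (hm1 y) (Γ y)
      (hy.congr (Filter.Eventually.of_forall fun z => hg (z, y)))
    exact h1.congr (Filter.Eventually.of_forall fun u => (hghat (u, y)).symm)
  have hsliceghat2 : ∀ᵐ y ∂μ, Integrable (fun u => ghat (u, y) ^ 2) ν := by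
    filter_upwards [hslice2] with y hy
    have hIin : Integrable (fun z => if z < Γ y then (max (f (z, y)) 0) ^ 2 else 0)
        (gaussianReal 0 1) := by
      refine hy.congr (Filter.Eventually.of_forall fun z => ?_)
      dsimp only
      rw [hg (z, y)]; split_ifs <;> ring
    have h2 := (csvr_keyint hΦ hΦinv (hm2 y) (Γ y) hIin).const_mul (Φ (Γ y))
    refine h2.congr (Filter.Eventually.of_forall fun u => ?_)
    dsimp only
    rw [hghat (u, y)]; ring
  -- a measurable a.e.-version of ghat on the product
  obtain ⟨Ψ, hΨmeas, hΨae⟩ := csvr_Phinv_aemeasurable hΦ hΦinv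
  replace hΨae : ∀ᵐ t ∂(volume : Measure ℝ), t ∈ Set.Ioo (0:ℝ) 1 → Φinv t = Ψ t :=
    (ae_restrict_iff' measurableSet_Ioo).1 hΨae
  set N := toMeasurable volume {t : ℝ | ¬ (t ∈ Set.Ioo (0:ℝ) 1 → Φinv t = Ψ t)} with hNdef
  have hNmeas : MeasurableSet N := measurableSet_toMeasurable _ _
  have hNnull : volume N = 0 := by
    rw [hNdef, measure_toMeasurable]
    exact hΨae
  have hNsub : ∀ t, t ∉ N → t ∈ Set.Ioo (0:ℝ) 1 → Φinv t = Ψ t := by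
    intro t htN hmem
    by_contra hne
    exact htN (subset_toMeasurable _ _ (fun himp => hne (himp hmem)))
  set G : ℝ × (Fin d → ℝ) → ℝ :=
    fun p => Φ (Γ p.2) * max (f (Ψ (p.1 * Φ (Γ p.2)), p.2)) 0 with hGdef
  have hargmeas : Measurable fun p : ℝ × (Fin d → ℝ) => p.1 * Φ (Γ p.2) :=
    measurable_fst.mul ((hΦm.comp hΓ).comp measurable_snd)
  have hGmeas : Measurable G :=
    ((hΦm.comp hΓ).comp measurable_snd).mul
      ((hf.comp ((hΨmeas.comp hargmeas).prodMk measurable_snd)).max measurable_const)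
  have hbad : (ν.prod μ) {p : ℝ × (Fin d → ℝ) | ghat p ≠ G p} = 0 := by
    have h1 : (ν.prod μ) (((Set.Ioo (0:ℝ) 1)ᶜ) ×ˢ (Set.univ : Set (Fin d → ℝ))) = 0 := by
      rw [Measure.prod_prod, hνdef, Measure.restrict_apply measurableSet_Ioo.compl]
      simp
    have h2 : (ν.prod μ) {p : ℝ × (Fin d → ℝ) | p.1 * Φ (Γ p.2) ∈ N} = 0 := by
      have hmeasset : MeasurableSet {p : ℝ × (Fin d → ℝ) | p.1 * Φ (Γ p.2) ∈ N} :=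
        hargmeas hNmeas
      rw [Measure.prod_apply_symm hmeasset]
      have hz : ∀ y, ν ((fun u => (u, y)) ⁻¹' {p : ℝ × (Fin d → ℝ) | p.1 * Φ (Γ p.2) ∈ N})
          = 0 := by
        intro y
        have hc0 := hΦ0 (Γ y)
        have hpre : Measurable fun u : ℝ => u * Φ (Γ y) := by fun_prop
        have h1 : ν ((fun u : ℝ => u * Φ (Γ y)) ⁻¹' N) = 0 := by
          rw [hνdef, Measure.restrict_apply (hpre hNmeas)]
          refine le_antisymm ?_ zero_le
          calc volume (((fun u : ℝ => u * Φ (Γ y)) ⁻¹' N) ∩ Set.Ioo 0 1)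
              ≤ volume ((fun u : ℝ => u * Φ (Γ y)) ⁻¹' N) :=
                measure_mono Set.inter_subset_left
            _ = ENNReal.ofReal |(Φ (Γ y))⁻¹| * volume N :=
                Real.volume_preimage_mul_right hc0.ne' N
            _ = 0 := by rw [hNnull, mul_zero]
        exact h1
      rw [lintegral_congr hz, lintegral_zero]
    refine measure_mono_null ?_ (measure_union_null h1 h2)
    intro p hp
    rw [Set.mem_union]
    by_contra hcon
    push_neg at hcon
    obtain ⟨hc1, hc2⟩ := hcon
    have hp1 : p.1 ∈ Set.Ioo (0:ℝ) 1 := by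
      by_contra h
      exact hc1 (Set.mem_prod.2 ⟨h, Set.mem_univ _⟩)
    have harg : p.1 * Φ (Γ p.2) ∈ Set.Ioo (0:ℝ) 1 := by
      constructor
      · exact mul_pos hp1.1 (hΦ0 _)
      · nlinarith [hΦ1 (Γ p.2), hΦ0 (Γ p.2), hp1.1, hp1.2]
    have heq := hNsub _ hc2 harg
    exact hp (by rw [hghat p, hGdef]; dsimp only; rw [heq])
  have hae : ∀ᵐ p ∂(ν.prod μ), ghat p = G p := by
    rw [ae_iff]
    exact hbad
  have hae' : ghat =ᵐ[ν.prod μ] G := hae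
  have hghatasm : AEStronglyMeasurable ghat (ν.prod μ) :=
    hGmeas.aestronglyMeasurable.congr hae'.symm
  have hghat2asm : AEStronglyMeasurable (fun p => ghat p ^ 2) (ν.prod μ) :=
    (hghatasm.mul hghatasm).congr
      (Filter.Eventually.of_forall fun p => (pow_two (ghat p)).symm)
  -- integrability of ghat and ghat² on the product
  have hI2int : Integrable I2 μ := by
    refine hint2.integral_norm_prod_right.congr (Filter.Eventually.of_forall fun y => ?_)
    exact integral_congr_ae (Filter.Eventually.of_forall fun z => by
      dsimp only
      rw [Real.norm_eq_abs, abs_of_nonneg (sq_nonneg _)])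
  have hI1int : Integrable I1 μ := by
    refine hgint.integral_norm_prod_right.congr (Filter.Eventually.of_forall fun y => ?_)
    exact integral_congr_ae (Filter.Eventually.of_forall fun z => by
      dsimp only
      rw [Real.norm_eq_abs, abs_of_nonneg (hgnonneg _)])
  have hcmul_int : Integrable (fun y => Φ (Γ y) * I2 y) μ := by
    refine hI2int.bdd_mul (c := 1) ((hΦm.comp hΓ).aestronglyMeasurable) ?_
    refine Filter.Eventually.of_forall fun y => ?_
    rw [Real.norm_eq_abs, abs_of_nonneg (hΦ0 _).le]
    exact (hΦ1 _).le
  have hghat2int : Integrable (fun p => ghat p ^ 2) (ν.prod μ) := by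
    refine (integrable_prod_iff' hghat2asm).2 ⟨hsliceghat2, ?_⟩
    have hcongr : (fun y => ∫ u, ‖ghat (u, y) ^ 2‖ ∂ν) = fun y => Φ (Γ y) * I2 y := by
      funext y
      rw [← hkey2 y]
      exact integral_congr_ae (Filter.Eventually.of_forall fun u => by
        dsimp only
        rw [Real.norm_eq_abs, abs_of_nonneg (sq_nonneg _)])
    rw [hcongr]
    exact hcmul_int
  have hghatnonneg : ∀ p, 0 ≤ ghat p := fun p => by
    rw [hghat p]
    exact mul_nonneg (hΦ0 _).le (le_max_right _ _)
  have hghatint : Integrable ghat (ν.prod μ) := by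
    refine Integrable.mono' (hghat2int.add (integrable_const 1)) hghatasm ?_
    refine Filter.Eventually.of_forall fun p => ?_
    rw [Real.norm_eq_abs, abs_of_nonneg (hghatnonneg p)]
    simp only [Pi.add_apply]
    nlinarith [sq_nonneg (ghat p - 1), hghatnonneg p]
  -- Fubini
  have hE1 : ∫ p, ghat p ∂(ν.prod μ) = ∫ y, I1 y ∂μ := by
    rw [integral_prod_symm ghat hghatint]
    exact integral_congr_ae (Filter.Eventually.of_forall fun y => hkey1 y)
  have hE1' : ∫ p, g p ∂((gaussianReal 0 1).prod μ) = ∫ y, I1 y ∂μ :=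
    integral_prod_symm g hgint
  have hE2 : ∫ p, ghat p ^ 2 ∂(ν.prod μ) = ∫ y, Φ (Γ y) * I2 y ∂μ := by
    rw [integral_prod_symm _ hghat2int]
    exact integral_congr_ae (Filter.Eventually.of_forall fun y => hkey2 y)
  have hE2' : ∫ p, g p ^ 2 ∂((gaussianReal 0 1).prod μ) = ∫ y, I2 y ∂μ :=
    integral_prod_symm _ hint2
  -- strict inequality of second moments
  have hI2nonneg : ∀ y, 0 ≤ I2 y := fun y => integral_nonneg fun z => sq_nonneg _
  have hposA : 0 < ∫ y, I1 y ∂μ := by rw [← hE1']; exact hpos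
  have hA : ¬ (∀ᵐ y ∂μ, I1 y ≤ 0) := fun h =>
    absurd (integral_nonpos_of_ae h) (not_le.2 hposA)
  have hI2setpos : 0 < μ {y | 0 < I2 y} := by
    by_contra hc
    push_neg at hc
    have h0 : μ {y | 0 < I2 y} = 0 := le_antisymm hc zero_le
    have hae2 : ∀ᵐ y ∂μ, I2 y ≤ 0 := by
      rw [ae_iff]
      convert h0 using 2
      ext y
      simp [not_le]
    refine hA ?_
    filter_upwards [hae2, hslice2, hslice1] with y h2 hy2 hy1
    have hI2z : I2 y = 0 := le_antisymm h2 (hI2nonneg y)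
    have hsq0 := (integral_eq_zero_iff_of_nonneg
      (fun z => sq_nonneg (g (z, y))) hy2).1 hI2z
    have hg0 : (fun z => g (z, y)) =ᵐ[gaussianReal 0 1] 0 := by
      refine hsq0.mono fun z hz => ?_
      have hz' : g (z, y) ^ 2 = 0 := hz
      exact pow_eq_zero_iff (two_ne_zero) |>.1 hz'
    exact le_of_eq (integral_eq_zero_of_ae hg0)
  have hsupp : 0 < μ (Function.support fun y => I2 y - Φ (Γ y) * I2 y) := by
    refine lt_of_lt_of_le hI2setpos (measure_mono ?_)
    intro y hy
    have h2 : 0 < I2 y := hy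
    have hlt : 0 < I2 y - Φ (Γ y) * I2 y := by nlinarith [hΦ1 (Γ y), hΦ0 (Γ y)]
    exact hlt.ne'
  have hdiffint : Integrable (fun y => I2 y - Φ (Γ y) * I2 y) μ := hI2int.sub hcmul_int
  have hnn : ∀ y, (0:ℝ) ≤ I2 y - Φ (Γ y) * I2 y := fun y => by
    nlinarith [hΦ1 (Γ y), hΦ0 (Γ y), hI2nonneg y]
  have hdiffpos : 0 < ∫ y, (I2 y - Φ (Γ y) * I2 y) ∂μ :=
    (integral_pos_iff_support_of_nonneg (fun y => hnn y) hdiffint).2 hsupp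
  have hstrict : ∫ y, Φ (Γ y) * I2 y ∂μ < ∫ y, I2 y ∂μ := by
    rw [integral_sub hI2int hcmul_int] at hdiffpos
    linarith
  rw [hE1, hE1', hE2, hE2']
  exact sub_lt_sub_right hstrict _
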